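/- For all finite connected simple graphs G and H, each with at least two vertices, every MEG-set of the strong product G ⊠ H is also an MEG-set of the Cartesian product G □ H; in particular meg(G □ H) ≤ meg(G ⊠ H). -/

import Mathlib

open SimpleGraph

/-- `S` is a monitoring edge-geodetic set (MEG-set) of `G`: for every edge `e` of `G`
there are `x, y ∈ S` whose distance in `G − e` differs from their distance in `G`
(including the case that they become disconnected in `G − e`). -/
def IsMEGSet {V : Type*} (G : SimpleGraph V) (S : Set V) : Prop :=
  ∀ e ∈ G.edgeSet, ∃ x ∈ S, ∃ y ∈ S,
    ¬ (G.deleteEdges {e}).Reachable x y ∨ (G.deleteEdges {e}).dist x y ≠ G.dist x y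

/-- The monitoring edge-geodetic number: the minimum cardinality of an MEG-set. -/
noncomputable def meg {V : Type*} [Fintype V] (G : SimpleGraph V) : ℕ :=
  sInf {n | ∃ S : Set V, IsMEGSet G S ∧ S.ncard = n}

/-- The strong product `G ⊠ H` of two simple graphs: `(a,b)` adjacent to `(c,d)` iff
`a = c` and `bd ∈ E(H)`, or `b = d` and `ac ∈ E(G)`, or `ac ∈ E(G)` and `bd ∈ E(H)`. -/
def strongProd {α β : Type*} (G : SimpleGraph α) (H : SimpleGraph β) :
    SimpleGraph (α × β) where
  Adj x y := (x.1 = y.1 ∧ H.Adj x.2 y.2) ∨ (x.2 = y.2 ∧ G.Adj x.1 y.1) ∨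
    (G.Adj x.1 y.1 ∧ H.Adj x.2 y.2)
  symm := ⟨fun x y => by
    rintro (⟨h1, h2⟩ | ⟨h1, h2⟩ | ⟨h1, h2⟩)
    · exact Or.inl ⟨h1.symm, h2.symm⟩
    · exact Or.inr (Or.inl ⟨h1.symm, h2.symm⟩)
    · exact Or.inr (Or.inr ⟨h1.symm, h2.symm⟩)⟩
  loopless := ⟨fun x => by
    rintro (⟨_, h⟩ | ⟨_, h⟩ | ⟨h, _⟩)
    · exact H.loopless.irrefl _ h
    · exact G.loopless.irrefl _ h
    · exact G.loopless.irrefl _ h⟩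

infixl:70 " ⊠ " => strongProd

section Aux

variable {V W : Type*} {G : SimpleGraph V} {H : SimpleGraph W}

private lemma exists_adj' {α : Type*} [Fintype α] {K : SimpleGraph α}
    (hK : K.Connected) (hcard : 1 < Fintype.card α) (v : α) : ∃ w, K.Adj v w := by
  obtain ⟨w, hw⟩ := Fintype.exists_ne_of_one_lt_card hcard v
  obtain ⟨p⟩ := hK.preconnected v w
  cases p with
  | nil => exact absurd rfl hw
  | cons h _ => exact ⟨_, h⟩

private lemma box_adj_strong {x y : V × W} (h : (G □ H).Adj x y) : (G ⊠ H).Adj x y := by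
  rcases boxProd_adj.mp h with ⟨h1, h2⟩ | ⟨h1, h2⟩
  · exact Or.inr (Or.inl ⟨h2, h1⟩)
  · exact Or.inl ⟨h2, h1⟩

private lemma midpoint_lemma [Fintype V] [Fintype W]
    (hG : G.Connected) (hH : H.Connected) (hV : 1 < Fintype.card V) (hW : 1 < Fintype.card W)
    {u v w : V × W} (huv : (G □ H).Adj u v) (hvw : (G ⊠ H).Adj v w)
    (huw : ¬ (G ⊠ H).Adj u w) :
    ∃ z, (G ⊠ H).Adj u z ∧ (G ⊠ H).Adj z w ∧ z ≠ v := by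
  obtain ⟨a, b⟩ := u
  obtain ⟨a', b'⟩ := v
  obtain ⟨c, d⟩ := w
  rcases boxProd_adj.mp huv with ⟨hGa, hb⟩ | ⟨hHb, ha⟩
  · -- G-type edge: b = b'
    simp only at hGa hb
    subst hb
    have hvw' : (a' = c ∧ H.Adj b d) ∨ (b = d ∧ G.Adj a' c) ∨ (G.Adj a' c ∧ H.Adj b d) := hvw
    rcases hvw' with ⟨h1, h2⟩ | ⟨h1, h2⟩ | ⟨h1, h2⟩
    · subst h1
      exact absurd (Or.inr (Or.inr ⟨hGa, h2⟩) : (G ⊠ H).Adj (a, b) (a', d)) huw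
    · subst h1
      obtain ⟨b'', hb''⟩ := exists_adj' hH hW b
      exact ⟨(a', b''), Or.inr (Or.inr ⟨hGa, hb''⟩), Or.inr (Or.inr ⟨h2, hb''.symm⟩),
        fun h => hb''.ne' (Prod.ext_iff.mp h).2⟩
    · exact ⟨(a', d), Or.inr (Or.inr ⟨hGa, h2⟩), Or.inr (Or.inl ⟨rfl, h1⟩),
        fun h => h2.ne' (Prod.ext_iff.mp h).2⟩
  · -- H-type edge: a = a'
    simp only at hHb ha
    subst ha
    have hvw' : (a = c ∧ H.Adj b' d) ∨ (b' = d ∧ G.Adj a c) ∨ (G.Adj a c ∧ H.Adj b' d) := hvw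
    rcases hvw' with ⟨h1, h2⟩ | ⟨h1, h2⟩ | ⟨h1, h2⟩
    · subst h1
      obtain ⟨a'', ha''⟩ := exists_adj' hG hV a
      exact ⟨(a'', b'), Or.inr (Or.inr ⟨ha'', hHb⟩), Or.inr (Or.inr ⟨ha''.symm, h2⟩),
        fun h => ha''.ne' (Prod.ext_iff.mp h).1⟩
    · subst h1
      exact absurd (Or.inr (Or.inr ⟨h2, hHb⟩) : (G ⊠ H).Adj (a, b) (c, b')) huw
    · exact ⟨(c, b'), Or.inr (Or.inr ⟨h1, hHb⟩), Or.inl ⟨rfl, h2⟩,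
        fun h => h1.ne' (Prod.ext_iff.mp h).1⟩

private lemma surgery [Fintype V] [Fintype W]
    (hG : G.Connected) (hH : H.Connected) (hV : 1 < Fintype.card V) (hW : 1 < Fintype.card W)
    {u v : V × W} (huv : (G □ H).Adj u v) {y : V × W} :
    ∀ {x : V × W} (p : (G ⊠ H).Walk x y), p.IsPath → p.length = (G ⊠ H).dist x y →
      s(x, y) ≠ s(u, v) → ∃ q : (G ⊠ H).Walk x y, q.length = p.length ∧ s(u, v) ∉ q.edges := by
  intro x p
  induction p with
  | nil => exact fun _ _ _ => ⟨.nil, rfl, by simp⟩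
  | @cons x x₁ y hadj p' ih =>
    intro hpath hlen hne
    rw [Walk.length_cons] at hlen
    obtain ⟨r, hr⟩ := p'.reachable.exists_walk_length_eq_dist
    have hdr : (G ⊠ H).dist x y ≤ r.length + 1 := by
      have := SimpleGraph.dist_le (Walk.cons hadj r)
      simpa using this
    have hdp' : (G ⊠ H).dist x₁ y ≤ p'.length := SimpleGraph.dist_le p'
    have hp'len : p'.length = (G ⊠ H).dist x₁ y := le_antisymm (by omega) hdp'
    by_cases hA : s(x, x₁) = s(u, v)
    · -- the first edge is the deleted edge
      have hbox : (G □ H).Adj x x₁ := by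
        rw [← SimpleGraph.mem_edgeSet] at huv ⊢
        rwa [hA]
      cases p' with
      | nil => exact absurd hA hne
      | @cons _ x₂ _ hadj2 p'' =>
        rw [Walk.length_cons] at hlen hp'len
        have hxx2 : ¬ (G ⊠ H).Adj x x₂ := by
          intro hc
          have := SimpleGraph.dist_le (Walk.cons hc p'')
          rw [Walk.length_cons] at this
          omega
        obtain ⟨z, hz1, hz2, hzv⟩ := midpoint_lemma hG hH hV hW hbox hadj2 hxx2
        refine ⟨Walk.cons hz1 (Walk.cons hz2 p''), by simp [Walk.length_cons], ?_⟩
        rw [← hA]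
        simp only [Walk.edges_cons, List.mem_cons]
        rintro (h | h | h)
        · rcases Sym2.eq_iff.mp h with ⟨-, h1⟩ | ⟨h1, h2⟩
          · exact hzv h1.symm
          · exact hadj.ne h2.symm
        · rcases Sym2.eq_iff.mp h with ⟨h1, h2⟩ | ⟨h1, h2⟩
          · exact hadj2.ne h2
          · exact hzv h2.symm
        · have hmem : x ∈ p''.support := Walk.fst_mem_support_of_mem_edges p'' h
          have hx : x ∉ (Walk.cons hadj2 p'').support := ((Walk.cons_isPath_iff _ _).mp hpath).2
          rw [Walk.support_cons] at hx
          exact hx (List.mem_cons_of_mem _ hmem)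
    · by_cases hB : s(x₁, y) = s(u, v)
      · -- the last edge (of this length-2 geodesic) is the deleted edge
        have hbox : (G □ H).Adj x₁ y := by
          rw [← SimpleGraph.mem_edgeSet] at huv ⊢
          rwa [hB]
        have hx1y : (G ⊠ H).Adj x₁ y := box_adj_strong hbox
        have hd1 : (G ⊠ H).dist x₁ y = 1 := SimpleGraph.dist_eq_one_iff_adj.mpr hx1y
        have hp1 : p'.length = 1 := by rw [hp'len, hd1]
        have hdxy : (G ⊠ H).dist x y = 2 := by omega
        have hyx : ¬ (G ⊠ H).Adj y x := by
          intro hc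
          have := SimpleGraph.dist_le (Walk.cons hc.symm Walk.nil)
          simp only [Walk.length_cons, Walk.length_nil] at this
          omega
        obtain ⟨z, hz1, hz2, hzv⟩ := midpoint_lemma hG hH hV hW hbox.symm hadj.symm hyx
        refine ⟨Walk.cons hz2.symm (Walk.cons hz1.symm Walk.nil), by simp [hp1], ?_⟩
        rw [← hB]
        simp only [Walk.edges_cons, Walk.edges_nil, List.mem_cons, List.not_mem_nil, or_false]
        rintro (h | h)
        · rcases Sym2.eq_iff.mp h with ⟨h1, h2⟩ | ⟨h1, h2⟩
          · exact hadj.ne h1.symm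
          · exact hzv h1.symm
        · rcases Sym2.eq_iff.mp h with ⟨h1, h2⟩ | ⟨h1, h2⟩
          · exact hzv h1.symm
          · exact hx1y.ne h1
      · obtain ⟨q', hq'len, hq'e⟩ := ih ((Walk.cons_isPath_iff _ _).mp hpath).1 hp'len hB
        refine ⟨Walk.cons hadj q', by simp [hq'len], ?_⟩
        simp only [Walk.edges_cons, List.mem_cons]
        rintro (h | h)
        · exact hA h.symm
        · exact hq'e h

private lemma dist_preserved [Fintype V] [Fintype W]
    (hG : G.Connected) (hH : H.Connected) (hV : 1 < Fintype.card V) (hW : 1 < Fintype.card W)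
    {u v x y : V × W} (huv : (G □ H).Adj u v) (hne : s(x, y) ≠ s(u, v)) :
    ((G ⊠ H).deleteEdges {s(u, v)}).Reachable x y ∧
      ((G ⊠ H).deleteEdges {s(u, v)}).dist x y = (G ⊠ H).dist x y := by
  have hle : (G □ H) ≤ (G ⊠ H) := fun a b h => box_adj_strong h
  have hreach : (G ⊠ H).Reachable x y :=
    ((connected_boxProd.mpr ⟨hG, hH⟩).preconnected x y).mono hle
  obtain ⟨p, hpath, hplen⟩ := hreach.exists_path_of_dist
  obtain ⟨q, hqlen, hqe⟩ := surgery hG hH hV hW huv p hpath hplen hne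
  have hq' : ∀ e, e ∈ q.edges → e ∉ ({s(u, v)} : Set (Sym2 (V × W))) := by
    intro e he hmem
    rw [Set.mem_singleton_iff] at hmem
    exact hqe (hmem ▸ he)
  set q' := q.toDeleteEdges {s(u, v)} hq' with hq'def
  have hq'len : q'.length = q.length := Walk.length_transfer _ _
  refine ⟨q'.reachable, le_antisymm ?_ ?_⟩
  · calc ((G ⊠ H).deleteEdges {s(u, v)}).dist x y ≤ q'.length := SimpleGraph.dist_le q'
      _ = (G ⊠ H).dist x y := by rw [hq'len, hqlen, hplen]
  · obtain ⟨r, hr⟩ := q'.reachable.exists_walk_length_eq_dist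
    calc (G ⊠ H).dist x y ≤ (r.mapLe ((G ⊠ H).deleteEdges_le _)).length :=
        SimpleGraph.dist_le _
      _ = r.length := Walk.length_map _ _
      _ = _ := hr

private lemma endpoints_monitor {α : Type*} {K : SimpleGraph α} {x y : α} (h : K.Adj x y) :
    ¬ (K.deleteEdges {s(x, y)}).Reachable x y ∨
      (K.deleteEdges {s(x, y)}).dist x y ≠ K.dist x y := by
  by_cases hr : (K.deleteEdges {s(x, y)}).Reachable x y
  · right
    rw [SimpleGraph.dist_eq_one_iff_adj.mpr h]
    intro hc
    have : (K.deleteEdges {s(x, y)}).Adj x y := SimpleGraph.dist_eq_one_iff_adj.mp hc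
    rw [SimpleGraph.deleteEdges_adj] at this
    exact this.2 rfl
  · exact Or.inl hr

private lemma univ_isMEGSet {α : Type*} (K : SimpleGraph α) : IsMEGSet K Set.univ := by
  intro e he
  induction e with
  | h u v =>
    exact ⟨u, Set.mem_univ u, v, Set.mem_univ v, endpoints_monitor (K.mem_edgeSet.mp he)⟩

end Aux

theorem isMEGSet_strongProd_isMEGSet_boxProd {V W : Type*} [Fintype V] [Fintype W]
    (G : SimpleGraph V) (H : SimpleGraph W)
    (hG : G.Connected) (hH : H.Connected)
    (hV : 1 < Fintype.card V) (hW : 1 < Fintype.card W) :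
    (∀ S : Set (V × W), IsMEGSet (G ⊠ H) S → IsMEGSet (G □ H) S) ∧
      meg (G □ H) ≤ meg (G ⊠ H) := by
  have main : ∀ S : Set (V × W), IsMEGSet (G ⊠ H) S → IsMEGSet (G □ H) S := by
    intro S hS e he
    induction e with
    | h u v =>
      have huv : (G □ H).Adj u v := (G □ H).mem_edgeSet.mp he
      have he' : s(u, v) ∈ (G ⊠ H).edgeSet := (G ⊠ H).mem_edgeSet.mpr (box_adj_strong huv)
      obtain ⟨x, hxS, y, hyS, hxy⟩ := hS s(u, v) he'
      have hxyuv : s(x, y) = s(u, v) := by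
        by_contra hc
        obtain ⟨h1, h2⟩ := dist_preserved hG hH hV hW huv hc
        rcases hxy with h | h
        · exact h h1
        · exact h h2
      have hadjxy : (G □ H).Adj x y := (G □ H).mem_edgeSet.mp (by rw [hxyuv]; exact he)
      refine ⟨x, hxS, y, hyS, ?_⟩
      rw [← hxyuv]
      exact endpoints_monitor hadjxy
  refine ⟨main, ?_⟩
  have hsub : {n | ∃ S : Set (V × W), IsMEGSet (G ⊠ H) S ∧ S.ncard = n} ⊆
      {n | ∃ S : Set (V × W), IsMEGSet (G □ H) S ∧ S.ncard = n} := by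
    rintro n ⟨S, h1, h2⟩
    exact ⟨S, main S h1, h2⟩
  have hnonempty : {n | ∃ S : Set (V × W), IsMEGSet (G ⊠ H) S ∧ S.ncard = n}.Nonempty :=
    ⟨(Set.univ : Set (V × W)).ncard, Set.univ, univ_isMEGSet _, rfl⟩
  exact csInf_le_csInf (OrderBot.bddBelow _) hnonempty hsub
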